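/- Let U ⊆ ℝ^{Nτ} be a nonempty, compact, convex set and let Λ ∈ ℝ^{Nτ}. Then there exists a unique u* ∈ U such that ⟨Γu* + Λ, u − u*⟩ ≥ 0 for all u ∈ U. That is, the variational inequality VI(U, F) with F(u) = Γu + Λ has exactly one solution. -/

import Mathlib

open Kronecker Matrix
open scoped RealInnerProductSpace

/-- Proposition 5 of the paper: for `Γ = (2α+k)·(I_N ⊗ I_τ) + k·(1_{N×N} ⊗ I_τ)` and any
nonempty, compact, convex set `U` of collective strategies, the variational inequality
`VI(U, F)` with `F(u) = Γu + Λ` has exactly one solution, i.e. the variational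
generalized Nash equilibrium exists and is unique. -/
theorem variational_GNE_exists_unique
    (N τ : ℕ) (hN : 1 ≤ N) (hτ : 1 ≤ τ) (α k : ℝ) (hα : 0 < α) (hk : 0 < k)
    (Γ : Matrix (Fin N × Fin τ) (Fin N × Fin τ) ℝ)
    (hΓ : Γ = (2 * α + k) • ((1 : Matrix (Fin N) (Fin N) ℝ) ⊗ₖ (1 : Matrix (Fin τ) (Fin τ) ℝ))
        + k • ((Matrix.of fun _ _ => (1 : ℝ)) ⊗ₖ (1 : Matrix (Fin τ) (Fin τ) ℝ)))
    (U : Set (EuclideanSpace ℝ (Fin N × Fin τ)))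
    (hU_ne : U.Nonempty) (hU_cpt : IsCompact U) (hU_cvx : Convex ℝ U)
    (Λ : EuclideanSpace ℝ (Fin N × Fin τ)) :
    ∃! ustar : EuclideanSpace ℝ (Fin N × Fin τ), ustar ∈ U ∧
      ∀ u ∈ U, 0 ≤ ⟪Matrix.toEuclideanLin Γ ustar + Λ, u - ustar⟫ := by
  classical
  set T : EuclideanSpace ℝ (Fin N × Fin τ) →ₗ[ℝ] EuclideanSpace ℝ (Fin N × Fin τ) :=
    Matrix.toEuclideanLin Γ with hTdef
  have hck : 0 < 2 * α + k := by linarith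
  -- entrywise formula
  have hmul : ∀ (x : EuclideanSpace ℝ (Fin N × Fin τ)) (p : Fin N × Fin τ),
      T x p = (2 * α + k) * x p + k * ∑ m, x (m, p.2) := by
    intro x p
    show Matrix.toEuclideanLin Γ x p = _
    rw [Matrix.toEuclideanLin_apply]
    show (Γ *ᵥ fun q => x q) p = _
    simp only [hΓ, Matrix.mulVec, dotProduct, Matrix.add_apply, Matrix.smul_apply,
      Matrix.kroneckerMap_apply, Matrix.one_apply, Matrix.of_apply, smul_eq_mul]
    rw [Fintype.sum_prod_type]
    obtain ⟨n, t⟩ := p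
    simp only [one_mul, mul_ite, mul_one, mul_zero, ite_mul, zero_mul, add_mul,
      Finset.sum_add_distrib, Finset.sum_ite_eq, Finset.mem_univ, if_true, Finset.mul_sum]
  -- inner product formula
  have hinner : ∀ x y : EuclideanSpace ℝ (Fin N × Fin τ), ⟪T x, y⟫ =
      (2 * α + k) * ∑ p, x p * y p + k * ∑ t, (∑ m, x (m, t)) * (∑ n, y (n, t)) := by
    intro x y
    rw [PiLp.inner_apply]
    simp only [RCLike.inner_apply, starRingEnd_apply, star_trivial, hmul]
    rw [Finset.sum_congr rfl (fun p _ => mul_comm _ _)]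
    rw [Finset.sum_congr rfl (fun p _ => add_mul _ _ _), Finset.sum_add_distrib]
    congr 1
    · rw [Finset.mul_sum]
      exact Finset.sum_congr rfl fun p _ => by ring
    · rw [Fintype.sum_prod_type, Finset.sum_comm, Finset.mul_sum]
      refine Finset.sum_congr rfl fun t _ => ?_
      rw [show (∑ n : Fin N, (k * ∑ m, x (m, (n, t).2)) * y (n, t))
          = ∑ n : Fin N, k * ((∑ m, x (m, t)) * y (n, t)) from
        Finset.sum_congr rfl fun n _ => by ring, ← Finset.mul_sum]
      congr 1
      exact (Finset.mul_sum _ _ _).symm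
  -- symmetry
  have hsym : ∀ x y : EuclideanSpace ℝ (Fin N × Fin τ), ⟪T x, y⟫ = ⟪T y, x⟫ := by
    intro x y
    rw [hinner, hinner]
    congr 1
    · congr 1; exact Finset.sum_congr rfl fun p _ => mul_comm _ _
    · congr 1; exact Finset.sum_congr rfl fun t _ => mul_comm _ _
  -- coercivity
  have hQpos : ∀ w : EuclideanSpace ℝ (Fin N × Fin τ),
      (2 * α + k) * ‖w‖ ^ 2 ≤ ⟪T w, w⟫ := by
    intro w
    rw [hinner]
    have h1 : ‖w‖ ^ 2 = ∑ p, w p * w p := by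
      rw [← real_inner_self_eq_norm_sq, PiLp.inner_apply]
      simp [RCLike.inner_apply]
      exact Finset.sum_congr rfl fun p _ => sq _
    rw [h1]
    have h2 : 0 ≤ k * ∑ t, (∑ m, w (m, t)) * (∑ n, w (n, t)) := by
      apply mul_nonneg hk.le
      exact Finset.sum_nonneg fun t _ => mul_self_nonneg _
    linarith
  have hQnn : ∀ w : EuclideanSpace ℝ (Fin N × Fin τ), (0 : ℝ) ≤ ⟪T w, w⟫ := fun w =>
    le_trans (by positivity) (hQpos w)
  -- the quadratic objective
  set g : EuclideanSpace ℝ (Fin N × Fin τ) → ℝ := fun u => ⟪T u, u⟫ / 2 + ⟪Λ, u⟫ with hg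
  have hTcont : Continuous T := T.continuous_of_finiteDimensional
  have hgcont : Continuous g := by
    apply Continuous.add
    · exact (Continuous.inner (hTcont.comp continuous_id) continuous_id).div_const 2
    · exact Continuous.inner continuous_const continuous_id
  obtain ⟨u₀, hu₀U, hu₀min⟩ := hU_cpt.exists_isMinOn hU_ne hgcont.continuousOn
  -- u₀ solves the VI
  have hVI : ∀ u ∈ U, 0 ≤ ⟪T u₀ + Λ, u - u₀⟫ := by
    intro u huU
    set w : EuclideanSpace ℝ (Fin N × Fin τ) := u - u₀ with hw
    set L : ℝ := ⟪T u₀ + Λ, w⟫ with hL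
    set q : ℝ := ⟪T w, w⟫ with hq
    have hqnn : 0 ≤ q := hQnn w
    have key : ∀ t : ℝ, 0 < t → t ≤ 1 → 0 ≤ L + t / 2 * q := by
      intro t ht0 ht1
      have hmem : u₀ + t • w ∈ U := by
        have := hU_cvx hu₀U huU (by linarith : (0:ℝ) ≤ 1 - t) ht0.le (by ring)
        convert this using 1
        simp only [hw]
        module
      have hle : g u₀ ≤ g (u₀ + t • w) := hu₀min hmem
      have hexp : g (u₀ + t • w) = g u₀ + t * (L + t / 2 * q) := by
        simp only [hg, hL, hq]
        have e1 : T (u₀ + t • w) = T u₀ + t • T w := by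
          rw [map_add, LinearMap.map_smul]
        rw [e1, inner_add_left, inner_add_left, inner_add_right, inner_add_right,
          real_inner_smul_left, real_inner_smul_left, real_inner_smul_right,
          real_inner_smul_right, inner_add_right, real_inner_smul_right]
        have hsw : ⟪T w, u₀⟫ = ⟪T u₀, w⟫ := hsym w u₀
        rw [hsw]
        ring
      rw [hexp] at hle
      have h0 : 0 ≤ t * (L + t / 2 * q) := by linarith
      by_contra hcon
      push_neg at hcon
      nlinarith [mul_pos ht0 (by linarith : (0:ℝ) < -(L + t / 2 * q))]
    by_contra hneg
    push_neg at hneg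
    have hLneg : L < 0 := hneg
    have hq1 : (0:ℝ) < q + 1 := by linarith
    have ht0 : 0 < min 1 (-L / (q + 1)) := by
      apply lt_min one_pos
      apply div_pos (by linarith) hq1
    have hkey := key (min 1 (-L / (q + 1))) ht0 (min_le_left _ _)
    have hle2 : min 1 (-L / (q + 1)) ≤ -L / (q + 1) := min_le_right _ _
    have hmono : min 1 (-L / (q + 1)) / 2 * q ≤ (-L / (q + 1)) / 2 * q := by
      apply mul_le_mul_of_nonneg_right _ hqnn
      linarith
    have hlt : (-L / (q + 1)) / 2 * q < -L := by
      rw [div_mul_eq_mul_div, div_mul_eq_mul_div, div_div, div_lt_iff₀ (by linarith)]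
      nlinarith
    linarith
  refine ⟨u₀, ⟨hu₀U, hVI⟩, ?_⟩
  -- uniqueness
  rintro v ⟨hvU, hvVI⟩
  have h1 : 0 ≤ ⟪T u₀ + Λ, v - u₀⟫ := hVI v hvU
  have h2 : 0 ≤ ⟪T v + Λ, u₀ - v⟫ := hvVI u₀ hu₀U
  have hdiff : (2 * α + k) * ‖v - u₀‖ ^ 2 ≤ ⟪T (v - u₀), v - u₀⟫ := hQpos (v - u₀)
  have hexp : ⟪T (v - u₀), v - u₀⟫ = ⟪T v, v - u₀⟫ - ⟪T u₀, v - u₀⟫ := by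
    rw [map_sub, inner_sub_left]
  have e1 : ⟪T u₀ + Λ, v - u₀⟫ = ⟪T u₀, v - u₀⟫ + ⟪Λ, v - u₀⟫ := inner_add_left _ _ _
  have e2 : ⟪T v + Λ, u₀ - v⟫ = ⟪T v, u₀ - v⟫ + ⟪Λ, u₀ - v⟫ := inner_add_left _ _ _
  have e3 : ⟪T v, u₀ - v⟫ = -⟪T v, v - u₀⟫ := by
    rw [show u₀ - v = -(v - u₀) by abel, inner_neg_right]
  have e4 : ⟪Λ, u₀ - v⟫ = -⟪Λ, v - u₀⟫ := by
    rw [show u₀ - v = -(v - u₀) by abel, inner_neg_right]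
  have hnorm0 : ‖v - u₀‖ ^ 2 ≤ 0 := by nlinarith
  have hz : ‖v - u₀‖ = 0 := by nlinarith [norm_nonneg (v - u₀), sq_nonneg ‖v - u₀‖]
  exact sub_eq_zero.mp (norm_eq_zero.mp hz)
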